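/- For every m-linear form U : (ℝⁿ)^m → ℝ with sup norms, (∑_{j₁}(∑_{j₂,…,j_m} |U(e_{j₁},…,e_{j_m})|²)^{1/2}) ≤ (√2)^{m−1} ‖U‖; i.e., the mixed (ℓ₁,ℓ₂)-Littlewood inequality with exponent (1,2,…,2) holds with constant (√2)^{m−1}. -/

import Mathlib

/-- Standard basis vector of `ℓ∞ⁿ`. -/
noncomputable def stdBasis (n : ℕ) (i : Fin n) : PiLp ⊤ (fun _ : Fin n => ℝ) :=
  (WithLp.equiv ⊤ (∀ _ : Fin n, ℝ)).symm (Pi.single i 1)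

open Finset

namespace LittlewoodAux

/-- Sign of a boolean. -/
def χ (b : Bool) : ℝ := if b then 1 else -1

lemma χ_mul_self (b : Bool) : χ b * χ b = 1 := by cases b <;> simp [χ]

lemma χ_not (b : Bool) : χ (!b) = - χ b := by cases b <;> simp [χ]

lemma abs_χ (b : Bool) : |χ b| = 1 := by cases b <;> simp [χ]

variable {n : ℕ}

/-- Walsh function. -/
def w (A : Finset (Fin n)) (x : Fin n → Bool) : ℝ := ∏ i ∈ A, χ (x i)

lemma sum_w (A : Finset (Fin n)) :
    ∑ x : Fin n → Bool, w A x = if A = ∅ then (2 : ℝ) ^ n else 0 := by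
  have h : ∀ x : Fin n → Bool, w A x
      = ∏ i : Fin n, (if i ∈ A then χ (x i) else 1) := by
    intro x
    rw [Finset.prod_ite_mem]
    simp [w, Finset.univ_inter]
  simp_rw [h]
  have key := Fintype.prod_sum (κ := fun _ : Fin n => Bool)
    (f := fun i b => if i ∈ A then χ b else 1)
  rw [← key]
  by_cases hA : A = ∅
  · simp [hA, χ]
  · obtain ⟨i, hi⟩ := Finset.nonempty_iff_ne_empty.2 hA
    rw [if_neg hA]
    apply Finset.prod_eq_zero (Finset.mem_univ i)
    simp [hi, χ]

lemma w_mul_w (A B : Finset (Fin n)) (x : Fin n → Bool) :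
    w A x * w B x = w (symmDiff A B) x := by
  classical
  have h1 : w A x = w (A \ B) x * w (A ∩ B) x := by
    rw [w, w, w, ← Finset.prod_union (Finset.disjoint_sdiff_inter A B),
      Finset.sdiff_union_inter]
  have h2 : w B x = w (B \ A) x * w (B ∩ A) x := by
    rw [w, w, w, ← Finset.prod_union (Finset.disjoint_sdiff_inter B A),
      Finset.sdiff_union_inter]
  have h3 : w (A ∩ B) x * w (B ∩ A) x = 1 := by
    rw [Finset.inter_comm B A, w, ← Finset.prod_mul_distrib]
    exact Finset.prod_eq_one fun i _ => χ_mul_self (x i)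
  have h4 : w (symmDiff A B) x = w (A \ B) x * w (B \ A) x := by
    rw [symmDiff_def, w, w, w]
    rw [← Finset.prod_union disjoint_sdiff_sdiff]
    rfl
  calc w A x * w B x
      = (w (A \ B) x * w (B \ A) x) * (w (A ∩ B) x * w (B ∩ A) x) := by rw [h1, h2]; ring
    _ = w (symmDiff A B) x := by rw [h3, h4, mul_one]

lemma orth (A B : Finset (Fin n)) :
    ∑ x : Fin n → Bool, w A x * w B x = if A = B then (2 : ℝ) ^ n else 0 := by
  simp_rw [w_mul_w]
  rw [sum_w]
  congr 1
  simp [symmDiff_eq_bot]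

/-- Fourier coefficient. -/
noncomputable def fc (f : (Fin n → Bool) → ℝ) (A : Finset (Fin n)) : ℝ :=
  (∑ x : Fin n → Bool, f x * w A x) / 2 ^ n

lemma sum_w_mul (g : (Fin n → Bool) → ℝ) (A : Finset (Fin n)) :
    ∑ x : Fin n → Bool, w A x * g x = fc g A * 2 ^ n := by
  rw [fc, div_mul_cancel₀]
  · exact Finset.sum_congr rfl fun x _ => mul_comm _ _
  · positivity

lemma inversion (f : (Fin n → Bool) → ℝ) (x : Fin n → Bool) :
    f x = ∑ A : Finset (Fin n), fc f A * w A x := by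
  classical
  have key : ∀ y : Fin n → Bool,
      ∑ A : Finset (Fin n), w A y * w A x = if y = x then (2:ℝ)^n else 0 := by
    intro y
    have h : ∀ A : Finset (Fin n), w A y * w A x
        = (∏ a ∈ A, χ (y a) * χ (x a)) * ∏ a ∈ Aᶜ, (1:ℝ) := by
      intro A
      rw [w, w, ← Finset.prod_mul_distrib]
      simp
    simp_rw [h]
    rw [← Fintype.prod_add]
    by_cases hyx : y = x
    · subst hyx
      simp_rw [χ_mul_self]
      norm_num
    · obtain ⟨i, hi⟩ : ∃ i, y i ≠ x i := by
        by_contra hc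
        push_neg at hc
        exact hyx (funext hc)
      rw [if_neg hyx]
      apply Finset.prod_eq_zero (Finset.mem_univ i)
      have : χ (y i) * χ (x i) = -1 := by
        cases hy : y i <;> cases hx : x i <;> simp_all [χ]
      rw [this]; ring
  simp_rw [fc, div_mul_eq_mul_div, Finset.sum_mul, ← Finset.sum_div]
  rw [Finset.sum_comm]
  simp_rw [mul_assoc, ← Finset.mul_sum, key]
  rw [Finset.sum_eq_single x]
  · simp
  · intro y _ hy; simp [hy]
  · intro h; exact absurd (Finset.mem_univ x) h

lemma parseval (f g : (Fin n → Bool) → ℝ) :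
    ∑ x : Fin n → Bool, f x * g x = (∑ A : Finset (Fin n), fc f A * fc g A) * 2 ^ n := by
  classical
  have h1 : ∀ x, f x * g x = ∑ A : Finset (Fin n), fc f A * (w A x * g x) := by
    intro x
    simp_rw [← mul_assoc, ← Finset.sum_mul, ← inversion]
  rw [Finset.sum_congr rfl fun x _ => h1 x, Finset.sum_comm, Finset.sum_mul]
  exact Finset.sum_congr rfl fun A _ => by
    rw [← Finset.mul_sum, sum_w_mul, mul_assoc]



/-- Flip coordinate `i`. -/
def flp (i : Fin n) (x : Fin n → Bool) : Fin n → Bool := Function.update x i (!x i)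

lemma flp_involutive (i : Fin n) : Function.Involutive (flp i) := by
  intro x
  funext j
  by_cases hj : j = i
  · subst hj; simp [flp]
  · simp [flp, Function.update_of_ne hj]

lemma sum_comp_flp (F : (Fin n → Bool) → ℝ) (i : Fin n) :
    ∑ x : Fin n → Bool, F (flp i x) = ∑ x : Fin n → Bool, F x :=
  Equiv.sum_comp ((flp_involutive i).toPerm _) F

lemma w_flp (A : Finset (Fin n)) (i : Fin n) (x : Fin n → Bool) :
    w A (flp i x) = (if i ∈ A then (-1:ℝ) else 1) * w A x := by
  by_cases hi : i ∈ A
  · rw [if_pos hi, w, w, ← Finset.mul_prod_erase A _ hi, ← Finset.mul_prod_erase A _ hi]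
    have h1 : ∀ j ∈ A.erase i, χ (flp i x j) = χ (x j) := by
      intro j hj
      rw [flp, Function.update_of_ne (Finset.ne_of_mem_erase hj)]
    rw [Finset.prod_congr rfl h1]
    have : χ (flp i x i) = - χ (x i) := by
      rw [flp, Function.update_self, χ_not]
    rw [this]; ring
  · rw [if_neg hi, one_mul, w, w]
    refine Finset.prod_congr rfl fun j hj => ?_
    rw [flp, Function.update_of_ne (by rintro rfl; exact hi hj)]

lemma sum_mul_w_flp (f : (Fin n → Bool) → ℝ) (A : Finset (Fin n)) (i : Fin n) :
    ∑ x : Fin n → Bool, f (flp i x) * w A x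
      = (if i ∈ A then (-1:ℝ) else 1) * ∑ x : Fin n → Bool, f x * w A x := by
  have h : ∀ x, f (flp i x) * w A x
      = (if i ∈ A then (-1:ℝ) else 1) * (f (flp i x) * w A (flp i x)) := by
    intro x
    rw [w_flp]
    have : w A (flp i (flp i x)) = (if i ∈ A then (-1:ℝ) else 1) * w A (flp i x) :=
      w_flp A i (flp i x)
    rw [flp_involutive i x] at this
    rw [this]
    by_cases hi : i ∈ A <;> simp [hi] <;> ring
  rw [Finset.sum_congr rfl fun x _ => h x, ← Finset.mul_sum,
    sum_comp_flp (fun y => f y * w A y) i]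

/-- Negation of all coordinates. -/
def negx (x : Fin n → Bool) : Fin n → Bool := fun i => !(x i)

lemma negx_involutive : Function.Involutive (negx (n := n)) := by
  intro x; funext i; simp [negx]

lemma w_negx (A : Finset (Fin n)) (x : Fin n → Bool) :
    w A (negx x) = (-1 : ℝ) ^ A.card * w A x := by
  rw [w, w]
  have : ∀ j ∈ A, χ (negx x j) = -1 * χ (x j) := by
    intro j _; rw [negx, χ_not]; ring
  rw [Finset.prod_congr rfl this, Finset.prod_mul_distrib, Finset.prod_const]

lemma fc_eq_zero_of_odd (f : (Fin n → Bool) → ℝ) (hf : ∀ x, f (negx x) = f x)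
    (A : Finset (Fin n)) (hA : ¬ Even A.card) : fc f A = 0 := by
  have h : ∑ x : Fin n → Bool, f x * w A x
      = (-1:ℝ) ^ A.card * ∑ x : Fin n → Bool, f x * w A x := by
    conv_lhs => rw [← Equiv.sum_comp (negx_involutive.toPerm _) (fun y => f y * w A y)]
    simp only [Function.Involutive.coe_toPerm]
    rw [Finset.mul_sum]
    refine Finset.sum_congr rfl fun x _ => ?_
    rw [hf, w_negx]; ring
  rw [Odd.neg_one_pow (Nat.not_even_iff_odd.1 hA)] at h
  have hs : ∑ x : Fin n → Bool, f x * w A x = 0 := by linarith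
  rw [fc, hs, zero_div]



lemma sum_pm (A : Finset (Fin n)) :
    ∑ i : Fin n, (if i ∈ A then (-1:ℝ) else 1) = (n:ℝ) - 2 * A.card := by
  have h : ∀ i : Fin n, (if i ∈ A then (-1:ℝ) else 1)
      = 1 - 2 * (if i ∈ A then (1:ℝ) else 0) := by
    intro i; by_cases hi : i ∈ A <;> simp [hi] <;> norm_num
  rw [Finset.sum_congr rfl fun i _ => h i, Finset.sum_sub_distrib, Finset.sum_const,
    ← Finset.mul_sum, Finset.sum_boole]
  simp [Finset.filter_univ_mem]

theorem khinchin1 (a : Fin n → ℝ) :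
    Real.sqrt (∑ i, a i ^ 2)
      ≤ Real.sqrt 2 * ((∑ x : Fin n → Bool, |∑ i, χ (x i) * a i|) / 2 ^ n) := by
  classical
  set S : (Fin n → Bool) → ℝ := fun x => ∑ i, χ (x i) * a i with hS
  set f : (Fin n → Bool) → ℝ := fun x => |S x| with hf
  -- second moment
  have hSsq : ∑ x : Fin n → Bool, S x ^ 2 = 2 ^ n * ∑ i, a i ^ 2 := by
    have e : ∀ x, S x ^ 2 = ∑ i, ∑ j, (a i * a j) * (w {i} x * w {j} x) := by
      intro x
      rw [sq, hS]
      rw [Finset.sum_mul_sum]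
      refine Finset.sum_congr rfl fun i _ => Finset.sum_congr rfl fun j _ => ?_
      simp only [w, Finset.prod_singleton]
      ring
    rw [Finset.sum_congr rfl fun x _ => e x, Finset.sum_comm]
    have e2 : ∀ i : Fin n, ∑ x : Fin n → Bool, ∑ j, (a i * a j) * (w {i} x * w {j} x)
        = a i * a i * 2 ^ n := by
      intro i
      rw [Finset.sum_comm]
      have e3 : ∀ j, ∑ x : Fin n → Bool, (a i * a j) * (w {i} x * w {j} x)
          = (a i * a j) * (if ({i} : Finset (Fin n)) = {j} then (2:ℝ)^n else 0) := by
        intro j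
        rw [← Finset.mul_sum, orth]
      rw [Finset.sum_congr rfl fun j _ => e3 j, Finset.sum_eq_single i]
      · simp
      · intro j _ hj
        rw [if_neg (by simpa [Finset.singleton_inj] using (Ne.symm hj)), mul_zero]
      · intro h; exact absurd (Finset.mem_univ i) h
    rw [Finset.sum_congr rfl fun i _ => e2 i, ← Finset.sum_mul]
    rw [mul_comm]
    congr 1
    exact Finset.sum_congr rfl fun i _ => (sq (a i)).symm ▸ by ring
  -- evenness
  have hfe : ∀ x, f (negx x) = f x := by
    intro x
    have : S (negx x) = - S x := by
      rw [hS, ← Finset.sum_neg_distrib]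
      refine Finset.sum_congr rfl fun i _ => ?_
      rw [negx, χ_not]; ring
    rw [hf]; simp only [this, abs_neg]
  -- flips
  have hSflp : ∀ (i : Fin n) x, S (flp i x) = S x - 2 * χ (x i) * a i := by
    intro i x
    have h1 := Finset.sum_erase_add Finset.univ (fun j => χ (flp i x j) * a j) (Finset.mem_univ i)
    have h2 := Finset.sum_erase_add Finset.univ (fun j => χ (x j) * a j) (Finset.mem_univ i)
    have h3 : ∑ j ∈ Finset.univ.erase i, χ (flp i x j) * a j
        = ∑ j ∈ Finset.univ.erase i, χ (x j) * a j := by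
      refine Finset.sum_congr rfl fun j hj => ?_
      rw [flp, Function.update_of_ne (Finset.ne_of_mem_erase hj)]
    have h4 : χ (flp i x i) = - χ (x i) := by
      rw [flp, Function.update_self, χ_not]
    have hl : S (flp i x) = (∑ j ∈ Finset.univ.erase i, χ (x j) * a j) + (- χ (x i)) * a i := by
      show (∑ j, χ (flp i x j) * a j) = _
      rw [← h1, h3, h4]
    have hr : S x = (∑ j ∈ Finset.univ.erase i, χ (x j) * a j) + χ (x i) * a i := by
      show (∑ j, χ (x j) * a j) = _
      rw [← h2]
    rw [hl, hr]; ring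
  have hsum_flp : ∀ x, ∑ i, S (flp i x) = ((n:ℝ) - 2) * S x := by
    intro x
    rw [Finset.sum_congr rfl fun i (_ : i ∈ Finset.univ) => hSflp i x,
      Finset.sum_sub_distrib, Finset.sum_const, Finset.card_univ, Fintype.card_fin,
      nsmul_eq_mul]
    have h6 : ∑ i : Fin n, 2 * χ (x i) * a i = 2 * S x := by
      show _ = 2 * ∑ i, χ (x i) * a i
      rw [Finset.mul_sum]; exact Finset.sum_congr rfl fun i _ => by ring
    rw [h6]; ring
  set g : (Fin n → Bool) → ℝ := fun x => (∑ i, f (flp i x)) - ((n:ℝ) - 2) * f x with hg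
  have hg0 : ∀ x, 0 ≤ g x := by
    intro x
    have h1 : ((n:ℝ) - 2) * f x ≤ |((n:ℝ) - 2) * S x| := by
      rw [abs_mul, hf]
      have : ((n:ℝ) - 2) ≤ |(n:ℝ) - 2| := le_abs_self _
      exact mul_le_mul_of_nonneg_right this (abs_nonneg _) |>.trans_eq rfl
    have h2 : |((n:ℝ) - 2) * S x| = |∑ i, S (flp i x)| := by rw [hsum_flp]
    have h3 : |∑ i, S (flp i x)| ≤ ∑ i, f (flp i x) := by
      rw [hf]
      exact Finset.abs_sum_le_sum_abs _ _
    have h5 := h1.trans (h2 ▸ h3)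
    show 0 ≤ (∑ i, f (flp i x)) - ((n:ℝ) - 2) * f x
    linarith
  have key : (0:ℝ) ≤ ∑ x : Fin n → Bool, f x * g x :=
    Finset.sum_nonneg fun x _ => mul_nonneg (abs_nonneg _) (hg0 x)
  -- Fourier coefficients of g
  have hfcg : ∀ A : Finset (Fin n), fc g A = (2 - 2 * (A.card:ℝ)) * fc f A := by
    intro A
    rw [fc, fc]
    have e1 : ∑ x : Fin n → Bool, g x * w A x
        = (∑ i, ∑ x : Fin n → Bool, f (flp i x) * w A x)
          - ((n:ℝ) - 2) * ∑ x : Fin n → Bool, f x * w A x := by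
      have h7 : ∀ x, g x * w A x
          = (∑ i, f (flp i x) * w A x) - ((n:ℝ) - 2) * (f x * w A x) := by
        intro x
        show ((∑ i, f (flp i x)) - ((n:ℝ) - 2) * f x) * w A x = _
        rw [sub_mul, Finset.sum_mul]; ring
      rw [Finset.sum_congr rfl fun x (_ : x ∈ Finset.univ) => h7 x, Finset.sum_sub_distrib,
        Finset.sum_comm, ← Finset.mul_sum]
    rw [e1]
    have e2 : ∑ i, ∑ x : Fin n → Bool, f (flp i x) * w A x
        = ((n:ℝ) - 2 * A.card) * ∑ x : Fin n → Bool, f x * w A x := by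
      rw [Finset.sum_congr rfl fun i _ => sum_mul_w_flp f A i, ← Finset.sum_mul, sum_pm]
    rw [e2]
    ring
  -- spectral inequality
  have key2 : (0:ℝ) ≤ ∑ A : Finset (Fin n), (2 - 2 * (A.card:ℝ)) * fc f A ^ 2 := by
    have hp := parseval f g
    rw [Finset.sum_congr rfl (fun A _ => by rw [hfcg A]; ring :
        ∀ A ∈ Finset.univ, fc f A * fc g A = (2 - 2 * (A.card:ℝ)) * fc f A ^ 2)] at hp
    have h2n : (0:ℝ) < 2 ^ n := by positivity
    nlinarith [key, hp]
  -- pull out the empty set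
  have hsplit : (2 - 2 * (((∅ : Finset (Fin n)).card):ℝ)) * fc f ∅ ^ 2
      + ∑ A ∈ Finset.univ.erase (∅ : Finset (Fin n)), (2 - 2 * (A.card:ℝ)) * fc f A ^ 2
      = ∑ A : Finset (Fin n), (2 - 2 * (A.card:ℝ)) * fc f A ^ 2 :=
    Finset.add_sum_erase Finset.univ
      (fun A : Finset (Fin n) => (2 - 2 * (A.card:ℝ)) * fc f A ^ 2) (Finset.mem_univ ∅)
  have hterm : ∀ A ∈ Finset.univ.erase (∅ : Finset (Fin n)),
      (2 - 2 * (A.card:ℝ)) * fc f A ^ 2 ≤ -2 * fc f A ^ 2 := by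
    intro A hA
    have hAne : A ≠ ∅ := Finset.ne_of_mem_erase hA
    by_cases hE : Even A.card
    · have hcard : 2 ≤ A.card := by
        rcases hE with ⟨k, hk⟩
        have : A.card ≠ 0 := by
          simpa [Finset.card_eq_zero] using hAne
        omega
      have : (2 - 2 * (A.card:ℝ)) ≤ -2 := by
        have : (2:ℝ) ≤ (A.card:ℝ) := by exact_mod_cast hcard
        linarith
      exact mul_le_mul_of_nonneg_right this (sq_nonneg _)
    · rw [fc_eq_zero_of_odd f hfe A hE]
      simp
  have hrest : ∑ A ∈ Finset.univ.erase (∅ : Finset (Fin n)), (2 - 2 * (A.card:ℝ)) * fc f A ^ 2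
      ≤ -2 * ∑ A ∈ Finset.univ.erase (∅ : Finset (Fin n)), fc f A ^ 2 := by
    rw [Finset.mul_sum]
    exact Finset.sum_le_sum hterm
  have hempty : (2 - 2 * ((∅ : Finset (Fin n)).card :ℝ)) * fc f ∅ ^ 2 = 2 * fc f ∅ ^ 2 := by
    simp
  have hsum_sq_split : fc f ∅ ^ 2 + ∑ A ∈ Finset.univ.erase (∅ : Finset (Fin n)), fc f A ^ 2
      = ∑ A : Finset (Fin n), fc f A ^ 2 :=
    Finset.add_sum_erase Finset.univ (fun A : Finset (Fin n) => fc f A ^ 2) (Finset.mem_univ ∅)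
  -- conclude ∑ fc² ≤ 2 fc∅²
  have hmain : ∑ A : Finset (Fin n), fc f A ^ 2 ≤ 2 * fc f ∅ ^ 2 := by
    rw [← hsplit, hempty] at key2
    rw [← hsum_sq_split]
    nlinarith [hrest, key2]
  -- identify quantities
  have hff : ∑ x : Fin n → Bool, f x * f x = 2 ^ n * ∑ i, a i ^ 2 := by
    rw [← hSsq]
    refine Finset.sum_congr rfl fun x _ => ?_
    rw [hf, ← abs_mul, ← sq, abs_sq]  -- may need adjusting
  have hpf := parseval f f
  have hEf : fc f ∅ = (∑ x : Fin n → Bool, f x) / 2 ^ n := by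
    rw [fc]
    congr 1
    refine Finset.sum_congr rfl fun x _ => ?_
    rw [w, Finset.prod_empty, mul_one]
  set E : ℝ := (∑ x : Fin n → Bool, f x) / 2 ^ n with hE
  have hE0 : 0 ≤ E := by
    rw [hE]
    apply div_nonneg (Finset.sum_nonneg fun x _ => abs_nonneg _) (by positivity)
  have hfin : ∑ i, a i ^ 2 ≤ 2 * E ^ 2 := by
    have h2n : (0:ℝ) < 2 ^ n := by positivity
    have : 2 ^ n * ∑ i, a i ^ 2 ≤ 2 * E ^ 2 * 2 ^ n := by
      rw [← hff, hpf]
      have := mul_le_mul_of_nonneg_right hmain (le_of_lt h2n)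
      calc (∑ A : Finset (Fin n), fc f A * fc f A) * 2 ^ n
          = (∑ A : Finset (Fin n), fc f A ^ 2) * 2 ^ n := by
            congr 1; exact Finset.sum_congr rfl fun A _ => (sq (fc f A)).symm
        _ ≤ 2 * fc f ∅ ^ 2 * 2 ^ n := this
        _ = 2 * E ^ 2 * 2 ^ n := by rw [hEf]
    nlinarith
  calc Real.sqrt (∑ i, a i ^ 2) ≤ Real.sqrt (2 * E ^ 2) := Real.sqrt_le_sqrt hfin
    _ = Real.sqrt 2 * E := by
        rw [Real.sqrt_mul (by norm_num), Real.sqrt_sq hE0]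

lemma euclid_sum_apply {ι : Type*} [Fintype ι] {κ : Type*} [Fintype κ]
    (V : κ → EuclideanSpace ℝ ι) (i : ι) :
    (∑ ε : κ, V ε) i = ∑ ε : κ, V ε i := by
  classical
  induction (Finset.univ : Finset κ) using Finset.induction with
  | empty => rfl
  | insert _ _ h ih => rw [Finset.sum_insert h, Finset.sum_insert h, ← ih]; rfl

theorem khinchinMulti (m : ℕ) (a : (Fin m → Fin n) → ℝ) :
    Real.sqrt (∑ jr : Fin m → Fin n, a jr ^ 2)
      ≤ Real.sqrt 2 ^ m *
        ((∑ X : Fin m → Fin n → Bool,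
            |∑ jr : Fin m → Fin n, (∏ s, χ (X s (jr s))) * a jr|) / ((2:ℝ) ^ n) ^ m) := by
  induction m with
  | zero =>
      simp only [pow_zero, one_mul, div_one]
      rw [Fintype.sum_unique, Fintype.sum_unique, Fintype.sum_unique]
      simp only [Finset.univ_eq_empty, Finset.prod_empty, one_mul]
      rw [Real.sqrt_sq_eq_abs]
  | succ m ih =>
      -- reindex the left-hand side
      set A : Fin n → (Fin m → Fin n) → ℝ := fun j jr => a (Fin.cons j jr) with hA
      have hL : ∑ jp : Fin (m+1) → Fin n, a jp ^ 2 = ∑ jr : Fin m → Fin n, ∑ j, A j jr ^ 2 := by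
        rw [← Fintype.sum_equiv (Fin.consEquiv (fun _ : Fin (m+1) => Fin n))
          (fun p => a (Fin.consEquiv _ p) ^ 2) (fun jp => a jp ^ 2) (fun p => rfl)]
        rw [Fintype.sum_prod_type, Finset.sum_comm]
        rfl
      set c : (Fin n → Bool) → (Fin m → Fin n) → ℝ := fun ε jr => ∑ j, χ (ε j) * A j jr with hc
      -- step B : scalar Khinchin + triangle inequality in ℓ²
      have hB : Real.sqrt (∑ jr : Fin m → Fin n, ∑ j, A j jr ^ 2)
          ≤ Real.sqrt 2 * ((∑ ε : Fin n → Bool,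
              Real.sqrt (∑ jr : Fin m → Fin n, c ε jr ^ 2)) / 2 ^ n) := by
        have h1 : ∀ jr : Fin m → Fin n,
            ∑ j, A j jr ^ 2 ≤ 2 * ((∑ ε : Fin n → Bool, |c ε jr|) / 2 ^ n) ^ 2 := by
          intro jr
          have hk := khinchin1 (fun j => A j jr)
          have h0 : (0:ℝ) ≤ ∑ j, A j jr ^ 2 := Finset.sum_nonneg fun j _ => sq_nonneg _
          calc ∑ j, A j jr ^ 2 = Real.sqrt (∑ j, A j jr ^ 2) ^ 2 := (Real.sq_sqrt h0).symm
            _ ≤ (Real.sqrt 2 * ((∑ x : Fin n → Bool, |∑ j, χ (x j) * A j jr|) / 2 ^ n)) ^ 2 :=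
                pow_le_pow_left₀ (Real.sqrt_nonneg _) hk 2
            _ = 2 * ((∑ ε : Fin n → Bool, |c ε jr|) / 2 ^ n) ^ 2 := by
                rw [mul_pow, Real.sq_sqrt (by norm_num : (0:ℝ) ≤ 2)]
        have h2 : ∑ jr : Fin m → Fin n, ∑ j, A j jr ^ 2
            ≤ 2 * ((∑ jr : Fin m → Fin n, (∑ ε : Fin n → Bool, |c ε jr|) ^ 2) / ((2:ℝ)^n)^2) := by
          have := Finset.sum_le_sum fun jr (_ : jr ∈ Finset.univ) => h1 jr
          calc ∑ jr : Fin m → Fin n, ∑ j, A j jr ^ 2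
              ≤ ∑ jr : Fin m → Fin n, 2 * ((∑ ε : Fin n → Bool, |c ε jr|) / 2 ^ n) ^ 2 := this
            _ = 2 * ((∑ jr : Fin m → Fin n, (∑ ε : Fin n → Bool, |c ε jr|) ^ 2) / ((2:ℝ)^n)^2) := by
                rw [Finset.sum_div, Finset.mul_sum]
                exact Finset.sum_congr rfl fun jr _ => by rw [div_pow]
        -- triangle inequality in Euclidean space
        set V : (Fin n → Bool) → EuclideanSpace ℝ (Fin m → Fin n) :=
          fun ε => (WithLp.equiv 2 _).symm (fun jr => |c ε jr|) with hV
        have hVapp : ∀ ε jr, V ε jr = |c ε jr| := fun ε jr => rfl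
        have hVnorm : ∀ ε, ‖V ε‖ = Real.sqrt (∑ jr : Fin m → Fin n, c ε jr ^ 2) := by
          intro ε
          rw [EuclideanSpace.norm_eq]
          congr 1
          refine Finset.sum_congr rfl fun jr _ => ?_
          rw [hVapp, Real.norm_eq_abs, abs_abs, sq_abs]
        have htri : Real.sqrt (∑ jr : Fin m → Fin n, (∑ ε : Fin n → Bool, |c ε jr|) ^ 2)
            ≤ ∑ ε : Fin n → Bool, Real.sqrt (∑ jr : Fin m → Fin n, c ε jr ^ 2) := by
          have h3 := norm_sum_le (Finset.univ : Finset (Fin n → Bool)) V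
          rw [EuclideanSpace.norm_eq] at h3
          have h4 : ∀ jr : Fin m → Fin n,
              ‖(∑ ε : Fin n → Bool, V ε) jr‖ ^ 2 = (∑ ε : Fin n → Bool, |c ε jr|) ^ 2 := by
            intro jr
            rw [euclid_sum_apply, Real.norm_eq_abs,
              Finset.sum_congr rfl fun ε (_ : ε ∈ Finset.univ) => hVapp ε jr,
              abs_of_nonneg (Finset.sum_nonneg fun ε _ => abs_nonneg _)]
          rw [Finset.sum_congr rfl fun jr _ => h4 jr] at h3
          calc Real.sqrt (∑ jr : Fin m → Fin n, (∑ ε : Fin n → Bool, |c ε jr|) ^ 2)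
              ≤ ∑ ε : Fin n → Bool, ‖V ε‖ := h3
            _ = ∑ ε : Fin n → Bool, Real.sqrt (∑ jr : Fin m → Fin n, c ε jr ^ 2) :=
                Finset.sum_congr rfl fun ε _ => hVnorm ε
        calc Real.sqrt (∑ jr : Fin m → Fin n, ∑ j, A j jr ^ 2)
            ≤ Real.sqrt (2 * ((∑ jr : Fin m → Fin n,
                (∑ ε : Fin n → Bool, |c ε jr|) ^ 2) / ((2:ℝ)^n)^2)) := Real.sqrt_le_sqrt h2
          _ = Real.sqrt 2 * (Real.sqrt (∑ jr : Fin m → Fin n,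
                (∑ ε : Fin n → Bool, |c ε jr|) ^ 2) / 2 ^ n) := by
              rw [Real.sqrt_mul (by norm_num : (0:ℝ) ≤ 2),
                Real.sqrt_div (Finset.sum_nonneg fun jr _ => sq_nonneg _),
                Real.sqrt_sq (by positivity : (0:ℝ) ≤ (2:ℝ)^n)]
          _ ≤ Real.sqrt 2 * ((∑ ε : Fin n → Bool,
                Real.sqrt (∑ jr : Fin m → Fin n, c ε jr ^ 2)) / 2 ^ n) := by
              apply mul_le_mul_of_nonneg_left _ (Real.sqrt_nonneg 2)
              apply div_le_div_of_nonneg_right htri (by positivity)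
      -- reindexing
      have hre : ∀ (ε : Fin n → Bool) (X : Fin m → Fin n → Bool),
          ∑ jp : Fin (m+1) → Fin n, (∏ s, χ ((Fin.cons ε X : Fin (m+1) → Fin n → Bool) s (jp s))) * a jp
            = ∑ jr : Fin m → Fin n, (∏ s, χ (X s (jr s))) * c ε jr := by
        intro ε X
        rw [← Fintype.sum_equiv (Fin.consEquiv (fun _ : Fin (m+1) => Fin n))
            (fun p => (∏ s, χ ((Fin.cons ε X : Fin (m+1) → Fin n → Bool) s
                (((Fin.consEquiv (fun _ : Fin (m+1) => Fin n)) p) s)))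
              * a ((Fin.consEquiv (fun _ : Fin (m+1) => Fin n)) p))
            (fun jp => (∏ s, χ ((Fin.cons ε X : Fin (m+1) → Fin n → Bool) s (jp s))) * a jp) (fun p => rfl),
          Fintype.sum_prod_type]
        rw [Finset.sum_comm]
        refine Finset.sum_congr rfl fun jr _ => ?_
        have hprod : ∀ j : Fin n, (∏ s : Fin (m+1), χ ((Fin.cons ε X : Fin (m+1) → Fin n → Bool) s ((Fin.cons j jr : Fin (m+1) → Fin n) s)))
            = χ (ε j) * ∏ s : Fin m, χ (X s (jr s)) := by
          intro j
          rw [Fin.prod_univ_succ]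
          simp only [Fin.cons_zero, Fin.cons_succ]
        rw [hc]
        rw [Finset.mul_sum]
        refine Finset.sum_congr rfl fun j _ => ?_
        have : ((Fin.consEquiv (fun _ : Fin (m+1) => Fin n)) (j, jr)) = (Fin.cons j jr : Fin (m+1) → Fin n) := rfl
        rw [this, hprod j]
        show (χ (ε j) * ∏ s, χ (X s (jr s))) * a (Fin.cons j jr)
          = (∏ s, χ (X s (jr s))) * (χ (ε j) * a (Fin.cons j jr))
        ring
      have hsum_eq : ∑ X' : Fin (m+1) → Fin n → Bool,
          |∑ jp : Fin (m+1) → Fin n, (∏ s, χ (X' s (jp s))) * a jp|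
            = ∑ ε : Fin n → Bool, ∑ X : Fin m → Fin n → Bool,
              |∑ jr : Fin m → Fin n, (∏ s, χ (X s (jr s))) * c ε jr| := by
        rw [← Fintype.sum_equiv (Fin.consEquiv (fun _ : Fin (m+1) => Fin n → Bool))
            (fun p => |∑ jp : Fin (m+1) → Fin n,
              (∏ s, χ ((Fin.consEquiv (fun _ : Fin (m+1) => Fin n → Bool)) p s (jp s))) * a jp|)
            (fun X' => |∑ jp : Fin (m+1) → Fin n, (∏ s, χ (X' s (jp s))) * a jp|) (fun p => rfl),
          Fintype.sum_prod_type]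
        refine Finset.sum_congr rfl fun ε _ => Finset.sum_congr rfl fun X _ => ?_
        have : ((Fin.consEquiv (fun _ : Fin (m+1) => Fin n → Bool)) (ε, X)) = (Fin.cons ε X : Fin (m+1) → Fin n → Bool) := rfl
        rw [this, hre ε X]
      calc Real.sqrt (∑ jp : Fin (m+1) → Fin n, a jp ^ 2)
          = Real.sqrt (∑ jr : Fin m → Fin n, ∑ j, A j jr ^ 2) := by rw [hL]
        _ ≤ Real.sqrt 2 * ((∑ ε : Fin n → Bool,
              Real.sqrt (∑ jr : Fin m → Fin n, c ε jr ^ 2)) / 2 ^ n) := hB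
        _ ≤ Real.sqrt 2 * ((∑ ε : Fin n → Bool, Real.sqrt 2 ^ m *
              ((∑ X : Fin m → Fin n → Bool,
                |∑ jr : Fin m → Fin n, (∏ s, χ (X s (jr s))) * c ε jr|) / ((2:ℝ)^n)^m)) / 2 ^ n) := by
            apply mul_le_mul_of_nonneg_left _ (Real.sqrt_nonneg 2)
            exact div_le_div_of_nonneg_right
              (Finset.sum_le_sum fun ε _ => ih (c ε)) (by positivity)
        _ = Real.sqrt 2 ^ (m+1) * ((∑ X' : Fin (m+1) → Fin n → Bool,
              |∑ jp : Fin (m+1) → Fin n, (∏ s, χ (X' s (jp s))) * a jp|) / ((2:ℝ)^n)^(m+1)) := by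
            rw [hsum_eq]
            simp only [← Finset.mul_sum]
            rw [← Finset.sum_div, pow_succ, pow_succ]
            ring

lemma pilp_sum_apply {κ : Type*} [Fintype κ]
    (V : κ → PiLp ⊤ (fun _ : Fin n => ℝ)) (k : Fin n) :
    (∑ ε : κ, V ε) k = ∑ ε : κ, V ε k := by
  classical
  induction (Finset.univ : Finset κ) using Finset.induction with
  | empty => rfl
  | insert _ _ h ih => rw [Finset.sum_insert h, Finset.sum_insert h, ← ih]; rfl

lemma norm_le_one_of (v : Fin n → ℝ) (h : ∀ j, |v j| ≤ 1) :
    ‖(WithLp.equiv ⊤ (∀ _ : Fin n, ℝ)).symm v‖ ≤ 1 := by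
  rw [PiLp.norm_eq_ciSup]
  refine Real.iSup_le (fun j => ?_) zero_le_one
  rw [WithLp.equiv_symm_apply, PiLp.toLp_apply, Real.norm_eq_abs]
  exact h j

end LittlewoodAux

open LittlewoodAux in
lemma sum_smul_stdBasis {n : ℕ} (c : Fin n → ℝ) :
    ∑ j, c j • stdBasis n j = (WithLp.equiv ⊤ (∀ _ : Fin n, ℝ)).symm c := by
  ext k
  rw [pilp_sum_apply (fun j => c j • stdBasis n j) k, WithLp.equiv_symm_apply, PiLp.toLp_apply]
  have h : ∀ j, (c j • stdBasis n j) k = c j * (if k = j then 1 else 0) := by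
    intro j
    show c j * (stdBasis n j) k = _
    congr 1
    rw [stdBasis, WithLp.equiv_symm_apply, PiLp.toLp_apply, Pi.single_apply]
  rw [Finset.sum_congr rfl fun j _ => h j]
  simp

open LittlewoodAux in
theorem stmt9 (m n : ℕ)
    (U : ContinuousMultilinearMap ℝ (fun _ : Fin (m + 1) => PiLp ⊤ fun _ : Fin n => ℝ) ℝ) :
    ∑ j₁ : Fin n,
        (∑ jr : Fin m → Fin n,
          |U (Fin.cons (stdBasis n j₁) (fun s => stdBasis n (jr s)))| ^ 2) ^ ((1 : ℝ) / 2)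
      ≤ Real.sqrt 2 ^ m * ‖U‖ := by
  classical
  set e : Fin n → PiLp ⊤ (fun _ : Fin n => ℝ) := stdBasis n with he
  set zv : (Fin n → Bool) → PiLp ⊤ (fun _ : Fin n => ℝ) :=
    fun ε => (WithLp.equiv ⊤ (∀ _ : Fin n, ℝ)).symm (fun j => χ (ε j)) with hzv
  set T : Fin n → (Fin m → Fin n → Bool) → ℝ := fun j₁ X =>
    ∑ jr : Fin m → Fin n, (∏ s, χ (X s (jr s))) * U (Fin.cons (e j₁) (fun s => e (jr s)))
    with hT
  -- Step 1: apply multilinear Khinchin for each j₁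
  have hstep : ∀ j₁ : Fin n,
      (∑ jr : Fin m → Fin n, |U (Fin.cons (e j₁) (fun s => e (jr s)))| ^ 2) ^ ((1:ℝ)/2)
        ≤ Real.sqrt 2 ^ m *
          ((∑ X : Fin m → Fin n → Bool, |T j₁ X|) / ((2:ℝ)^n)^m) := by
    intro j₁
    have hk := khinchinMulti (n := n) m (fun jr => U (Fin.cons (e j₁) (fun s => e (jr s))))
    rw [← Real.sqrt_eq_rpow]
    have hsq : ∑ jr : Fin m → Fin n, |U (Fin.cons (e j₁) (fun s => e (jr s)))| ^ 2
        = ∑ jr : Fin m → Fin n, (U (Fin.cons (e j₁) (fun s => e (jr s)))) ^ 2 :=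
      Finset.sum_congr rfl fun jr _ => sq_abs _
    rw [hsq]
    exact hk
  -- Step 2: multilinearity: T j₁ X = U applied to sign vectors
  have hTz : ∀ (j₁ : Fin n) (X : Fin m → Fin n → Bool),
      T j₁ X = U (Fin.cons (e j₁) (fun s => zv (X s))) := by
    intro j₁ X
    set coef : Fin (m+1) → Fin n → ℝ :=
      Fin.cons (fun j => if j = j₁ then (1:ℝ) else 0) (fun s j => χ (X s j)) with hcoef
    have hcoord : (Fin.cons (e j₁) (fun s => zv (X s)) : Fin (m+1) → PiLp ⊤ (fun _ : Fin n => ℝ))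
        = fun s => ∑ j, coef s j • e j := by
      funext s
      refine Fin.cases ?_ ?_ s
      · rw [Fin.cons_zero]
        have : ∀ j, coef 0 j • e j = if j = j₁ then e j else 0 := by
          intro j
          rw [hcoef, Fin.cons_zero]
          by_cases hj : j = j₁ <;> simp [hj]
        rw [Finset.sum_congr rfl fun j _ => this j, Finset.sum_ite_eq' Finset.univ j₁]
        simp
      · intro s'
        rw [Fin.cons_succ]
        have : ∀ j, coef s'.succ j • e j = χ (X s' j) • e j := by
          intro j
          rw [hcoef, Fin.cons_succ]
        rw [Finset.sum_congr rfl fun j _ => this j, he, sum_smul_stdBasis]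
    rw [hcoord]
    have hms := U.toMultilinearMap.map_sum (fun s j => coef s j • e j)
    rw [show U (fun s => ∑ j, coef s j • e j)
        = U.toMultilinearMap (fun s => ∑ j, coef s j • e j) from rfl, hms]
    have hsmul : ∀ r : Fin (m+1) → Fin n,
        U.toMultilinearMap (fun s => coef s (r s) • e (r s))
          = (∏ s, coef s (r s)) • U.toMultilinearMap (fun s => e (r s)) :=
      fun r => U.toMultilinearMap.map_smul_univ (fun s => coef s (r s)) (fun s => e (r s))
    rw [Finset.sum_congr rfl fun r _ => hsmul r]
    rw [← Fintype.sum_equiv (Fin.consEquiv (fun _ : Fin (m+1) => Fin n))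
        (fun p => (∏ s, coef s (((Fin.consEquiv (fun _ : Fin (m+1) => Fin n)) p) s))
          • U.toMultilinearMap (fun s => e (((Fin.consEquiv (fun _ : Fin (m+1) => Fin n)) p) s)))
        (fun r => (∏ s, coef s (r s)) • U.toMultilinearMap (fun s => e (r s))) (fun p => rfl),
      Fintype.sum_prod_type]
    rw [Finset.sum_eq_single j₁]
    · refine (Finset.sum_congr rfl fun jr _ => ?_).symm
      have h1 : ((Fin.consEquiv (fun _ : Fin (m+1) => Fin n)) (j₁, jr))
          = (Fin.cons j₁ jr : Fin (m+1) → Fin n) := rfl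
      rw [h1]
      have h2 : (∏ s : Fin (m+1), coef s ((Fin.cons j₁ jr : Fin (m+1) → Fin n) s))
          = ∏ s : Fin m, χ (X s (jr s)) := by
        rw [Fin.prod_univ_succ]
        simp only [Fin.cons_zero, Fin.cons_succ, hcoef]
        norm_num
      have h3 : (fun s => e ((Fin.cons j₁ jr : Fin (m+1) → Fin n) s))
          = Fin.cons (e j₁) (fun s => e (jr s)) := by
        funext s
        refine Fin.cases ?_ ?_ s
        · rw [Fin.cons_zero, Fin.cons_zero]
        · intro s'; rw [Fin.cons_succ, Fin.cons_succ]
      rw [h2, h3, smul_eq_mul]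
      rfl
    · intro j _ hj
      apply Finset.sum_eq_zero
      intro jr _
      have h1 : ((Fin.consEquiv (fun _ : Fin (m+1) => Fin n)) (j, jr))
          = (Fin.cons j jr : Fin (m+1) → Fin n) := rfl
      rw [h1]
      have h2 : (∏ s : Fin (m+1), coef s ((Fin.cons j jr : Fin (m+1) → Fin n) s)) = 0 := by
        rw [Fin.prod_univ_succ]
        simp only [Fin.cons_zero, Fin.cons_succ, hcoef]
        simp [hj]
      rw [h2, zero_smul]
    · intro h; exact absurd (Finset.mem_univ j₁) h
  -- Step 3: the ℓ∞ bound
  have hkey : ∀ X : Fin m → Fin n → Bool, ∑ j₁, |T j₁ X| ≤ ‖U‖ := by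
    intro X
    have hznorm : ∀ s : Fin m, ‖zv (X s)‖ ≤ 1 := by
      intro s
      apply norm_le_one_of
      intro j
      rw [abs_χ]
    set θ : Fin n → ℝ := fun j₁ =>
      if 0 ≤ U (Fin.cons (e j₁) (fun s => zv (X s))) then 1 else -1 with hθ
    have habs : ∀ j₁, |T j₁ X| = θ j₁ * U (Fin.cons (e j₁) (fun s => zv (X s))) := by
      intro j₁
      rw [hTz j₁ X]
      have hθj : θ j₁ = if 0 ≤ U (Fin.cons (e j₁) (fun s => zv (X s))) then (1:ℝ) else -1 := rfl
      rw [hθj]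
      by_cases h : 0 ≤ U (Fin.cons (e j₁) (fun s => zv (X s)))
      · rw [if_pos h, one_mul, abs_of_nonneg h]
      · push_neg at h
        rw [if_neg (not_le.mpr h), abs_of_neg h]
        ring
    set v : PiLp ⊤ (fun _ : Fin n => ℝ) := (WithLp.equiv ⊤ (∀ _ : Fin n, ℝ)).symm θ with hv
    have hvnorm : ‖v‖ ≤ 1 := by
      apply norm_le_one_of
      intro j
      have hθj : θ j = if 0 ≤ U (Fin.cons (e j) (fun s => zv (X s))) then (1:ℝ) else -1 := rfl
      rw [hθj]
      by_cases h : 0 ≤ U (Fin.cons (e j) (fun s => zv (X s))) <;> simp [h]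
    have hUv : U (Fin.cons v (fun s => zv (X s)))
        = ∑ j₁, θ j₁ * U (Fin.cons (e j₁) (fun s => zv (X s))) := by
      have h0 : v = ∑ j₁, θ j₁ • e j₁ := by rw [hv, he, sum_smul_stdBasis]
      rw [h0]
      have h1 : (Fin.cons (∑ j₁, θ j₁ • e j₁) (fun s => zv (X s))
            : ∀ _ : Fin (m+1), PiLp ⊤ (fun _ : Fin n => ℝ))
          = Function.update (Fin.cons v (fun s => zv (X s))) 0 (∑ j₁, θ j₁ • e j₁) :=
        (Fin.update_cons_zero _ _ _).symm
      rw [h1]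
      rw [show U (Function.update (Fin.cons v (fun s => zv (X s))) 0 (∑ j₁, θ j₁ • e j₁))
          = U.toMultilinearMap
              (Function.update (Fin.cons v (fun s => zv (X s))) 0 (∑ j₁, θ j₁ • e j₁)) from rfl,
        U.toMultilinearMap.map_update_sum Finset.univ 0 (fun j₁ => θ j₁ • e j₁)]
      refine Finset.sum_congr rfl fun j₁ _ => ?_
      rw [MultilinearMap.map_update_smul, Fin.update_cons_zero, smul_eq_mul]
      rfl
    have hsum : ∑ j₁, |T j₁ X| = U (Fin.cons v (fun s => zv (X s))) := by
      rw [hUv]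
      exact Finset.sum_congr rfl fun j₁ _ => habs j₁
    rw [hsum]
    have hle := U.le_opNorm (Fin.cons v (fun s => zv (X s)))
    have hprod : ∏ s : Fin (m+1), ‖(Fin.cons v (fun s' => zv (X s')) : ∀ _ : Fin (m+1), PiLp ⊤ (fun _ : Fin n => ℝ)) s‖ ≤ 1 := by
      apply Finset.prod_le_one (fun s _ => norm_nonneg _)
      intro s _
      refine Fin.cases ?_ ?_ s
      · rw [Fin.cons_zero]; exact hvnorm
      · intro s'; rw [Fin.cons_succ]; exact hznorm s'
    calc U (Fin.cons v (fun s => zv (X s)))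
        ≤ ‖U (Fin.cons v (fun s => zv (X s)))‖ := le_abs_self _
      _ ≤ ‖U‖ * ∏ s : Fin (m+1), ‖(Fin.cons v (fun s' => zv (X s')) : ∀ _ : Fin (m+1), PiLp ⊤ (fun _ : Fin n => ℝ)) s‖ := hle
      _ ≤ ‖U‖ * 1 := mul_le_mul_of_nonneg_left hprod (norm_nonneg U)
      _ = ‖U‖ := mul_one _
  -- Step 4: combine
  have hcard : (Fintype.card (Fin m → Fin n → Bool) : ℝ) = ((2:ℝ)^n)^m := by
    rw [Fintype.card_fun]
    rw [Fintype.card_fun]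
    push_cast
    simp
  calc ∑ j₁ : Fin n, (∑ jr : Fin m → Fin n,
          |U (Fin.cons (e j₁) (fun s => e (jr s)))| ^ 2) ^ ((1:ℝ)/2)
      ≤ ∑ j₁ : Fin n, Real.sqrt 2 ^ m *
          ((∑ X : Fin m → Fin n → Bool, |T j₁ X|) / ((2:ℝ)^n)^m) :=
        Finset.sum_le_sum fun j₁ _ => hstep j₁
    _ = Real.sqrt 2 ^ m *
          ((∑ X : Fin m → Fin n → Bool, ∑ j₁ : Fin n, |T j₁ X|) / ((2:ℝ)^n)^m) := by
        rw [← Finset.mul_sum, ← Finset.sum_div, Finset.sum_comm]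
    _ ≤ Real.sqrt 2 ^ m * ((∑ _X : Fin m → Fin n → Bool, ‖U‖) / ((2:ℝ)^n)^m) := by
        apply mul_le_mul_of_nonneg_left _ (by positivity)
        exact div_le_div_of_nonneg_right
          (Finset.sum_le_sum fun X _ => hkey X) (by positivity)
    _ = Real.sqrt 2 ^ m * ‖U‖ := by
        rw [Finset.sum_const, Finset.card_univ, nsmul_eq_mul, hcard]
        rw [mul_comm (((2:ℝ)^n)^m) ‖U‖, mul_div_assoc, div_self (by positivity), mul_one]
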